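/- Every finite congestion game of MGMG form admits a pure Nash equilibrium: any exact potential game on finite strategy spaces has a pure Nash equilibrium, where the Rosenthal potential Φ(s) = Σ_{resources e} Σ_{k=1}^{n_e(s)} r_e(k) strictly increases under any strictly improving unilateral deviation. -/

import Mathlib

open Finset

theorem congestion_game_has_pne
    (ι E : Type) [Fintype ι] [DecidableEq ι] [Fintype E] [DecidableEq E]
    (S : ι → Finset (Finset E)) (hS : ∀ i, (S i).Nonempty) (r : E → ℕ → ℝ) :
    -- `n s e` counts players using resource `e`; `pay i s` is player `i`'s payoff;
    -- `Φ` is the Rosenthal potential.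
    let n : (ι → Finset E) → E → ℕ := fun s e => (Finset.univ.filter (fun i => e ∈ s i)).card
    let pay : ι → (ι → Finset E) → ℝ := fun i s => ∑ e ∈ s i, r e (n s e)
    let Φ : (ι → Finset E) → ℝ := fun s => ∑ e : E, ∑ k ∈ Finset.Icc 1 (n s e), r e k
    -- (a) unilateral deviations change a player's payoff exactly as the potential;
    (∀ (s : ι → Finset E) (i : ι) (s' : Finset E), (∀ j, s j ∈ S j) → s' ∈ S i →
        pay i (Function.update s i s') - pay i s = Φ (Function.update s i s') - Φ s) ∧
    -- (b) a pure Nash equilibrium exists.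
    (∃ s : ι → Finset E, (∀ j, s j ∈ S j) ∧
        ∀ (i : ι) (s' : Finset E), s' ∈ S i → pay i (Function.update s i s') ≤ pay i s) := by
  intro n pay Φ
  have key : ∀ (s : ι → Finset E) (i : ι) (s' : Finset E),
      pay i (Function.update s i s') - pay i s = Φ (Function.update s i s') - Φ s := by
    intro s i s'
    set t := Function.update s i s' with ht
    have hpt : ∀ e : E,
        (if e ∈ s' then r e (n t e) else 0) - (if e ∈ s i then r e (n s e) else 0)
        = (∑ k ∈ Finset.Icc 1 (n t e), r e k) - (∑ k ∈ Finset.Icc 1 (n s e), r e k) := by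
      intro e
      by_cases h1 : e ∈ s' <;> by_cases h2 : e ∈ s i
      · have hn : n t e = n s e := by
          simp only [n]
          congr 1
          ext j
          by_cases hj : j = i <;> simp [ht, hj, Function.update_apply, h1, h2]
        simp [h1, h2, hn]
      · have hi : i ∉ Finset.univ.filter (fun j => e ∈ s j) := by simp [h2]
        have hf : Finset.univ.filter (fun j => e ∈ t j)
            = insert i (Finset.univ.filter (fun j => e ∈ s j)) := by
          ext j
          by_cases hj : j = i <;> simp [ht, hj, Function.update_apply, h1]
        have hn : n t e = n s e + 1 := by
          simp [n, hf, Finset.card_insert_of_notMem hi]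
        rw [hn, Finset.sum_Icc_succ_top (Nat.succ_le_succ (Nat.zero_le _))]
        simp [h1, h2]
      · have hi : i ∉ Finset.univ.filter (fun j => e ∈ t j) := by
          simp [ht, Function.update_self, h1]
        have hf : Finset.univ.filter (fun j => e ∈ s j)
            = insert i (Finset.univ.filter (fun j => e ∈ t j)) := by
          ext j
          by_cases hj : j = i <;> simp [ht, hj, Function.update_apply, h1, h2]
        have hn : n s e = n t e + 1 := by
          simp [n, hf, Finset.card_insert_of_notMem hi]
        rw [hn, Finset.sum_Icc_succ_top (Nat.succ_le_succ (Nat.zero_le _))]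
        simp [h1, h2]
      · have hn : n t e = n s e := by
          simp only [n]
          congr 1
          ext j
          by_cases hj : j = i <;> simp [ht, hj, Function.update_apply, h1, h2]
        simp [h1, h2, hn]
    have hpayt : pay i t = ∑ e : E, if e ∈ s' then r e (n t e) else 0 := by
      simp [pay, ht, Function.update_self, Finset.sum_ite_mem]
    have hpays : pay i s = ∑ e : E, if e ∈ s i then r e (n s e) else 0 := by
      simp [pay, Finset.sum_ite_mem]
    rw [hpayt, hpays, ← Finset.sum_sub_distrib]
    rw [show Φ t - Φ s = ∑ e : E, ((∑ k ∈ Finset.Icc 1 (n t e), r e k)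
        - (∑ k ∈ Finset.Icc 1 (n s e), r e k)) from (Finset.sum_sub_distrib _ _).symm]
    exact Finset.sum_congr rfl fun e _ => hpt e
  refine ⟨fun s i s' _ _ => key s i s', ?_⟩
  have hne : (Fintype.piFinset S).Nonempty := by
    obtain ⟨f, hf⟩ := Classical.axiomOfChoice hS
    exact ⟨f, Fintype.mem_piFinset.mpr hf⟩
  obtain ⟨s, hsmem, hmax⟩ := Finset.exists_max_image (Fintype.piFinset S) Φ hne
  refine ⟨s, Fintype.mem_piFinset.mp hsmem, fun i s' hs' => ?_⟩
  have hmem : Function.update s i s' ∈ Fintype.piFinset S := by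
    refine Fintype.mem_piFinset.mpr fun j => ?_
    by_cases hj : j = i
    · subst hj; simpa using hs'
    · simpa [Function.update_apply, hj] using Fintype.mem_piFinset.mp hsmem j
  have := hmax _ hmem
  have hk := key s i s'
  linarith
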